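/- Let n be even and consider the cyclic group ℤ_n with word length ψ(k) = min{k, n−k} for k ∈ {0,…,n−1}. Define b : ℤ_n → ℝ^{n/2} by b(0) = 0, b(k) = e₁ + … + e_k for 1 ≤ k ≤ n/2, and b(k) = e_{k−n/2+1} + … + e_{n/2} for n/2 + 1 ≤ k ≤ n−1. Then ‖b(j) − b(k)‖² = ψ(j − k mod n) for all j, k ∈ ℤ_n. -/
import Mathlib

lemma aux_count (m a c : ℕ) (ha : a < 2*m) (hca : c ≤ a) :
    ((Finset.range m).filter fun i =>
      ¬(((a ≤ m ∧ i + 1 ≤ a) ∨ (m < a ∧ a - m + 1 ≤ i + 1)) ↔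
        ((c ≤ m ∧ i + 1 ≤ c) ∨ (m < c ∧ c - m + 1 ≤ i + 1)))).card
    = min (a - c) (2*m - (a - c)) := by
  by_cases h1 : a ≤ m
  · have he : ((Finset.range m).filter fun i =>
      ¬(((a ≤ m ∧ i + 1 ≤ a) ∨ (m < a ∧ a - m + 1 ≤ i + 1)) ↔
        ((c ≤ m ∧ i + 1 ≤ c) ∨ (m < c ∧ c - m + 1 ≤ i + 1)))) = Finset.Ico c a := by
      ext i
      simp only [Finset.mem_filter, Finset.mem_range, Finset.mem_Ico]
      omega
    rw [he, Nat.card_Ico]; omega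
  · by_cases h2 : c ≤ m
    · by_cases h3 : c ≤ a - m
      · have hsub : Finset.Ico c (a-m) ⊆ Finset.range m := by
          intro i hi; simp only [Finset.mem_Ico, Finset.mem_range] at *; omega
        have he : ((Finset.range m).filter fun i =>
          ¬(((a ≤ m ∧ i + 1 ≤ a) ∨ (m < a ∧ a - m + 1 ≤ i + 1)) ↔
            ((c ≤ m ∧ i + 1 ≤ c) ∨ (m < c ∧ c - m + 1 ≤ i + 1)))) =
            Finset.range m \ Finset.Ico c (a-m) := by
          ext i
          simp only [Finset.mem_filter, Finset.mem_range, Finset.mem_Ico, Finset.mem_sdiff]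
          omega
        rw [he, Finset.card_sdiff_of_subset hsub, Nat.card_Ico, Finset.card_range]; omega
      · have hsub : Finset.Ico (a-m) c ⊆ Finset.range m := by
          intro i hi; simp only [Finset.mem_Ico, Finset.mem_range] at *; omega
        have he : ((Finset.range m).filter fun i =>
          ¬(((a ≤ m ∧ i + 1 ≤ a) ∨ (m < a ∧ a - m + 1 ≤ i + 1)) ↔
            ((c ≤ m ∧ i + 1 ≤ c) ∨ (m < c ∧ c - m + 1 ≤ i + 1)))) =
            Finset.range m \ Finset.Ico (a-m) c := by
          ext i
          simp only [Finset.mem_filter, Finset.mem_range, Finset.mem_Ico, Finset.mem_sdiff]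
          omega
        rw [he, Finset.card_sdiff_of_subset hsub, Nat.card_Ico, Finset.card_range]; omega
    · have he : ((Finset.range m).filter fun i =>
        ¬(((a ≤ m ∧ i + 1 ≤ a) ∨ (m < a ∧ a - m + 1 ≤ i + 1)) ↔
          ((c ≤ m ∧ i + 1 ≤ c) ∨ (m < c ∧ c - m + 1 ≤ i + 1)))) = Finset.Ico (c-m) (a-m) := by
        ext i
        simp only [Finset.mem_filter, Finset.mem_range, Finset.mem_Ico]
        omega
      rw [he, Nat.card_Ico]; omega

/-- For the cyclic group `ℤ_n` (`n` even) with word length `ψ(k) = min{k, n-k}`, the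
cocycle `b` defined coordinatewise below satisfies `‖b(j) - b(k)‖² = ψ(j - k)`. -/
theorem stmt_7 {n : ℕ} [NeZero n] (hn : Even n)
    (b : ZMod n → EuclideanSpace ℝ (Fin (n / 2)))
    (hb : ∀ (k : ZMod n) (j : Fin (n / 2)),
      b k j = if (k.val ≤ n / 2 ∧ j.val + 1 ≤ k.val) ∨
        (n / 2 < k.val ∧ k.val - n / 2 + 1 ≤ j.val + 1) then 1 else 0) :
    ∀ j k : ZMod n,
      ‖b j - b k‖ ^ 2 = ((min (j - k).val (n - (j - k).val) : ℕ) : ℝ) := by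
  intro j k
  obtain ⟨m, hm2⟩ := hn
  have hn2 : n = 2 * (n / 2) := by omega
  have ha : j.val < n := ZMod.val_lt j
  have hc : k.val < n := ZMod.val_lt k
  have hcast : ((j.val + n - k.val : ℕ) : ZMod n) = j - k := by
    have hk : k.val ≤ j.val + n := by omega
    push_cast [Nat.cast_sub hk]
    simp [ZMod.natCast_val, ZMod.cast_id]
  have hd : (j - k).val = (j.val + n - k.val) % n := by
    rw [← hcast, ZMod.val_natCast]
  have hpt : ∀ i : Fin (n / 2), ‖(b j - b k) i‖ ^ 2 =
      (fun t : ℕ => if ¬(((j.val ≤ n / 2 ∧ t + 1 ≤ j.val) ∨ (n / 2 < j.val ∧ j.val - n / 2 + 1 ≤ t + 1)) ↔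
        ((k.val ≤ n / 2 ∧ t + 1 ≤ k.val) ∨ (n / 2 < k.val ∧ k.val - n / 2 + 1 ≤ t + 1)))
        then (1:ℝ) else 0) i.val := by
    intro i
    have hsub : (b j - b k) i = b j i - b k i := rfl
    rw [hsub, hb, hb]
    beta_reduce
    by_cases h1 : (j.val ≤ n / 2 ∧ i.val + 1 ≤ j.val) ∨ (n / 2 < j.val ∧ j.val - n / 2 + 1 ≤ i.val + 1)
    · by_cases h2 : (k.val ≤ n / 2 ∧ i.val + 1 ≤ k.val) ∨ (n / 2 < k.val ∧ k.val - n / 2 + 1 ≤ i.val + 1)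
      · rw [if_pos h1, if_pos h2, if_neg (not_not_intro (iff_of_true h1 h2))]; norm_num
      · rw [if_pos h1, if_neg h2, if_pos (fun h => h2 (h.mp h1))]; norm_num
    · by_cases h2 : (k.val ≤ n / 2 ∧ i.val + 1 ≤ k.val) ∨ (n / 2 < k.val ∧ k.val - n / 2 + 1 ≤ i.val + 1)
      · rw [if_neg h1, if_pos h2, if_pos (fun h => h1 (h.mpr h2))]; norm_num
      · rw [if_neg h1, if_neg h2, if_neg (not_not_intro (iff_of_false h1 h2))]; norm_num
  have hnn : (0:ℝ) ≤ ∑ i, ‖(b j - b k) i‖ ^ 2 :=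
    Finset.sum_nonneg fun i _ => sq_nonneg _
  rw [EuclideanSpace.norm_eq, Real.sq_sqrt hnn,
    Finset.sum_congr rfl (fun i _ => hpt i),
    Fin.sum_univ_eq_sum_range (fun t : ℕ =>
      if ¬(((j.val ≤ n / 2 ∧ t + 1 ≤ j.val) ∨ (n / 2 < j.val ∧ j.val - n / 2 + 1 ≤ t + 1)) ↔
        ((k.val ≤ n / 2 ∧ t + 1 ≤ k.val) ∨ (n / 2 < k.val ∧ k.val - n / 2 + 1 ≤ t + 1)))
        then (1:ℝ) else 0) (n / 2),
    Finset.sum_boole]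
  norm_cast
  rcases le_or_gt k.val j.val with hle | hlt
  · have hdv : (j - k).val = j.val - k.val := by
      rw [hd]
      have h : j.val + n - k.val = (j.val - k.val) + n := by omega
      rw [h, Nat.add_mod_right, Nat.mod_eq_of_lt (by omega)]
    rw [hdv, aux_count (n / 2) j.val k.val (by omega) hle]
    omega
  · have hdv : (j - k).val = j.val + n - k.val := by
      rw [hd, Nat.mod_eq_of_lt (by omega)]
    have hsw : ((Finset.range (n / 2)).filter fun t =>
        ¬(((j.val ≤ n / 2 ∧ t + 1 ≤ j.val) ∨ (n / 2 < j.val ∧ j.val - n / 2 + 1 ≤ t + 1)) ↔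
          ((k.val ≤ n / 2 ∧ t + 1 ≤ k.val) ∨ (n / 2 < k.val ∧ k.val - n / 2 + 1 ≤ t + 1)))) =
        ((Finset.range (n / 2)).filter fun t =>
        ¬(((k.val ≤ n / 2 ∧ t + 1 ≤ k.val) ∨ (n / 2 < k.val ∧ k.val - n / 2 + 1 ≤ t + 1)) ↔
          ((j.val ≤ n / 2 ∧ t + 1 ≤ j.val) ∨ (n / 2 < j.val ∧ j.val - n / 2 + 1 ≤ t + 1)))) :=
      Finset.filter_congr fun t _ => not_congr Iff.comm
    rw [hsw, aux_count (n / 2) k.val j.val (by omega) (le_of_lt hlt), hdv]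
    omega
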